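/- Under Assumption A there exists a constant c > 0 depending only on a, b, s, C₁, C₂ such that for every 0 < η < 1 the subtree 𝒯_η and its outer leaves Λ_η = Λ(𝒯_η) satisfy #𝒯_η ≤ c · η^{−2/(2s+1)} ln(2/η) and #Λ_η ≤ c · a · η^{−2/(2s+1)} ln(2/η); moreover, for every 0 < σ < s there is a constant c_σ > 0 (depending also on σ) with #𝒯_η ≤ c_σ · η^{−2/(2σ+1)} and #Λ_η ≤ c_σ · η^{−2/(2σ+1)}. -/

import Mathlib

open MeasureTheory Set ProbabilityTheory
open scoped BigOperators ENNReal NNReal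

attribute [local instance] Classical.propDecidable

noncomputable section

/-- Euclidean space `ℝ^D`. -/
abbrev Euc (D : ℕ) : Type := EuclideanSpace ℝ (Fin D)

/-- A partition tree on a subset `X` of `ℝ^D`, with branching number at most `a`.
Cells are abstract nodes; `cset I` is the subset of `ℝ^D` associated with the cell `I`,
`depth I` its depth, `parent I` its parent. -/
structure PartitionTree (D : ℕ) (X : Set (Euc D)) (a : ℕ) : Type 1 where
  Cell : Type
  cellCountable : Countable Cell
  cset : Cell → Set (Euc D)
  depth : Cell → ℕ
  parent : Cell → Cell
  root : Cell
  root_cset : cset root = X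
  depth_root : depth root = 0
  parent_root : parent root = root
  eq_root_of_depth_eq_zero : ∀ I, depth I = 0 → I = root
  depth_parent : ∀ I, I ≠ root → depth (parent I) + 1 = depth I
  level_finite : ∀ j : ℕ, {I | depth I = j}.Finite
  level_cover : ∀ j : ℕ, ⋃ I ∈ {I | depth I = j}, cset I = X
  level_disjoint : ∀ I J, depth I = depth J → I ≠ J → Disjoint (cset I) (cset J)
  cset_measurable : ∀ I, MeasurableSet (cset I)
  cset_eq_iUnion_children : ∀ I, cset I = ⋃ J ∈ {J | parent J = I ∧ J ≠ root}, cset J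
  ncard_children_le : ∀ I, {J | parent J = I ∧ J ≠ root}.ncard ≤ a

namespace PartitionTree

variable {D : ℕ} {X : Set (Euc D)} {a : ℕ} (T : PartitionTree D X a)

/-- The children of a cell. -/
def children (I : T.Cell) : Set T.Cell := {J | T.parent J = I ∧ J ≠ T.root}

/-- `descend k I` is the set `𝒞^k(I)` of `k`-th generation descendants of `I`. -/
def descend : ℕ → T.Cell → Set T.Cell
  | 0, I => {I}
  | k + 1, I => ⋃ J ∈ descend k I, T.children J

/-- A subtree: a family of cells containing the parent of each of its cells. -/
def IsSubtree (S : Set T.Cell) : Prop := ∀ I ∈ S, T.parent I ∈ S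

/-- The outer leaves `Λ(𝒯)` of a subtree `𝒯`. -/
def outerLeaves (S : Set T.Cell) : Set T.Cell := {I | I ∉ S ∧ T.parent I ∈ S}

end PartitionTree

/-- The essential diameter of a set `I` with respect to the measure `ρ`:
`ediam ρ I = inf { diam (I \ J) | J ⊆ I Borel, ρ J = 0 }`. -/
def ediam {D : ℕ} (ρ : Measure (Euc D)) (I : Set (Euc D)) : ℝ :=
  ⨅ J : {J : Set (Euc D) // MeasurableSet J ∧ J ⊆ I ∧ ρ J = 0},
    Metric.diam (I \ (J : Set (Euc D)))

namespace PartitionTree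

variable {D : ℕ} {X : Set (Euc D)} {a : ℕ} (T : PartitionTree D X a)
  (ρ : Measure (Euc D)) (xstar : T.Cell → Euc D)

/-- The (population) center of mass `c_I` of a cell: `ρ(I)⁻¹ ∫_I x dρ(x)` if `ρ(I) > 0`,
and the arbitrary fixed point `xstar I` otherwise. -/
def center (I : T.Cell) : Euc D :=
  if ρ (T.cset I) ≠ 0 then (ρ (T.cset I)).toReal⁻¹ • ∫ x in T.cset I, x ∂ρ else xstar I

/-- The local expected distortion `ℰ_I = ∫_I ‖x - c_I‖² dρ(x)`. -/
def cellErr (I : T.Cell) : ℝ := ∫ x in T.cset I, ‖x - T.center ρ xstar I‖ ^ 2 ∂ρ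

/-- `ε_I² = ℰ_I - ∑_{J ∈ 𝒞(I)} ℰ_J`. -/
def epsSq (I : T.Cell) : ℝ :=
  T.cellErr ρ xstar I - ∑ᶠ J ∈ T.children I, T.cellErr ρ xstar J

/-- `ε_I ≥ 0`, defined by `ε_I² = ℰ_I - ∑_{J ∈ 𝒞(I)} ℰ_J`. -/
def eps (I : T.Cell) : ℝ := Real.sqrt (T.epsSq ρ xstar I)

/-- The subtree `𝒯_η`. -/
def Teta (η : ℝ) : Set T.Cell :=
  if ∀ I, T.eps ρ xstar I < η then {T.root}
  else {I | ∃ k, ∃ J ∈ T.descend k I, η ≤ T.eps ρ xstar J}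

/-- The nonlinear projection `P_Λ(x) = ∑_{I ∈ Λ} c_I 1_I(x)` associated with a family of
cells `Λ` and code vectors `c`. -/
def proj (c : T.Cell → Euc D) (Λ : Set T.Cell) (x : Euc D) : Euc D :=
  ∑ᶠ I ∈ Λ, (T.cset I).indicator (fun _ => c I) x

variable {n : ℕ}

/-- The number `n_I` of sample points lying in the cell `I`. -/
def empCount (x : Fin n → Euc D) (I : T.Cell) : ℕ := {i | x i ∈ T.cset I}.ncard

/-- The empirical center of mass `ĉ_I` of a cell: the average of the sample points lying in
`I` if there are any, and the arbitrary fixed point `xhat I` otherwise. -/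
def empCenter (xhat : T.Cell → Euc D) (x : Fin n → Euc D) (I : T.Cell) : Euc D :=
  if T.empCount x I ≠ 0 then
    ((T.empCount x I : ℝ))⁻¹ • ∑ᶠ i ∈ {i : Fin n | x i ∈ T.cset I}, x i
  else xhat I

/-- The empirical local distortion `Ê_I = n⁻¹ ∑_{i : X_i ∈ I} ‖X_i - ĉ_I‖²`. -/
def empErr (xhat : T.Cell → Euc D) (x : Fin n → Euc D) (I : T.Cell) : ℝ :=
  (n : ℝ)⁻¹ * ∑ᶠ i ∈ {i : Fin n | x i ∈ T.cset I}, ‖x i - T.empCenter xhat x I‖ ^ 2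

/-- `ε̂_I² = Ê_I - ∑_{J ∈ 𝒞(I)} Ê_J`. -/
def empEpsSq (xhat : T.Cell → Euc D) (x : Fin n → Euc D) (I : T.Cell) : ℝ :=
  T.empErr xhat x I - ∑ᶠ J ∈ T.children I, T.empErr xhat x J

/-- `ε̂_I ≥ 0`, defined by `ε̂_I² = Ê_I - ∑_{J ∈ 𝒞(I)} Ê_J`. -/
def empEps (xhat : T.Cell → Euc D) (x : Fin n → Euc D) (I : T.Cell) : ℝ :=
  Real.sqrt (T.empEpsSq xhat x I)

/-- The empirical subtree `T̂_η`, truncated at depth `jn`. -/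
def empTeta (xhat : T.Cell → Euc D) (x : Fin n → Euc D) (jn : ℕ) (η : ℝ) : Set T.Cell :=
  if ∀ I, T.depth I ≤ jn → T.empEps xhat x I < η then {T.root}
  else {I | ∃ k, ∃ J ∈ T.descend k I, T.depth J ≤ jn ∧ η ≤ T.empEps xhat x J}

end PartitionTree

/-- Assumption A: `ediam(I) ≤ C₁ ρ(I)^s` and `ediam(I) ≤ C₂ b^{-j_I}` for every cell `I`. -/
def AssumptionA {D : ℕ} {X : Set (Euc D)} {a : ℕ} (T : PartitionTree D X a)
    (ρ : Measure (Euc D)) (b s C₁ C₂ : ℝ) : Prop :=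
  ∀ I : T.Cell,
    ediam ρ (T.cset I) ≤ C₁ * (ρ (T.cset I)).toReal ^ s ∧
    ediam ρ (T.cset I) ≤ C₂ * b ^ (-(T.depth I : ℝ))
section Aux

namespace PartitionTree

variable {D : ℕ} {X : Set (Euc D)} {a : ℕ} (T : PartitionTree D X a)

lemma cset_subset_X (I : T.Cell) : T.cset I ⊆ X := by
  intro x hx
  have h := T.level_cover (T.depth I)
  rw [← h]
  exact Set.mem_biUnion (show I ∈ {J | T.depth J = T.depth I} from rfl) hx

lemma depth_child {I J : T.Cell} (hJ : J ∈ T.children I) : T.depth J = T.depth I + 1 := by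
  have h := T.depth_parent J hJ.2
  rw [hJ.1] at h; omega

lemma children_finite (I : T.Cell) : (T.children I).Finite :=
  (T.level_finite (T.depth I + 1)).subset fun J hJ => T.depth_child hJ

lemma cset_child_subset {I J : T.Cell} (hJ : J ∈ T.children I) : T.cset J ⊆ T.cset I := by
  rw [T.cset_eq_iUnion_children I]
  exact Set.subset_biUnion_of_mem hJ

lemma descend_cset_subset (k : ℕ) : ∀ {I J : T.Cell}, J ∈ T.descend k I → T.cset J ⊆ T.cset I := by
  induction k with
  | zero => intro I J hJ; rw [show J = I from hJ]
  | succ k ih =>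
      intro I J hJ
      obtain ⟨J', hJ', hJc⟩ := Set.mem_iUnion₂.1 hJ
      exact (T.cset_child_subset hJc).trans (ih hJ')

lemma descend_depth (k : ℕ) : ∀ {I J : T.Cell}, J ∈ T.descend k I → T.depth J = T.depth I + k := by
  induction k with
  | zero => intro I J hJ; rw [show J = I from hJ]; omega
  | succ k ih =>
      intro I J hJ
      obtain ⟨J', hJ', hJc⟩ := Set.mem_iUnion₂.1 hJ
      rw [T.depth_child hJc, ih hJ']; omega

variable (ρ : Measure (Euc D)) (xstar : T.Cell → Euc D)

lemma cellErr_nonneg (I : T.Cell) : 0 ≤ T.cellErr ρ xstar I :=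
  integral_nonneg fun x => by positivity

lemma epsSq_le_cellErr (I : T.Cell) : T.epsSq ρ xstar I ≤ T.cellErr ρ xstar I := by
  have h : (0:ℝ) ≤ ∑ᶠ J ∈ T.children I, T.cellErr ρ xstar J := by
    rw [finsum_mem_eq_finite_toFinset_sum _ (T.children_finite I)]
    exact Finset.sum_nonneg fun J _ => T.cellErr_nonneg ρ xstar J
  have := sub_le_sub_left h (T.cellErr ρ xstar I)
  simpa [epsSq] using this

end PartitionTree

section Analytic

variable {D : ℕ} {X : Set (Euc D)} {a : ℕ} {T : PartitionTree D X a}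
  {ρ : Measure (Euc D)} {xstar : T.Cell → Euc D}

lemma norm_le_one_of_memX (hbd : Bornology.IsBounded X) (hdiam : Metric.diam X ≤ 1)
    (h0 : (0 : Euc D) ∈ X) {x : Euc D} (hx : x ∈ X) : ‖x‖ ≤ 1 := by
  have h := Metric.dist_le_diam_of_mem hbd hx h0
  rw [dist_zero_right] at h
  exact h.trans hdiam

lemma integrableOn_id [IsProbabilityMeasure ρ] (hbd : Bornology.IsBounded X)
    (hdiam : Metric.diam X ≤ 1) (h0 : (0 : Euc D) ∈ X) (I : T.Cell) :
    MeasureTheory.IntegrableOn (fun y : Euc D => y) (T.cset I) ρ := by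
  refine Measure.integrableOn_of_bounded (M := 1) (measure_ne_top ρ _)
    aestronglyMeasurable_id ?_
  filter_upwards [ae_restrict_mem (T.cset_measurable I)] with y hy
  exact norm_le_one_of_memX hbd hdiam h0 (T.cset_subset_X I hy)

/-- The key geometric estimate: `ℰ_I ≤ diam(I \ K)² ρ(I)` for every admissible null set `K`. -/
lemma cellErr_le_diam_sq [IsProbabilityMeasure ρ] (hbd : Bornology.IsBounded X)
    (hdiam : Metric.diam X ≤ 1) (h0 : (0 : Euc D) ∈ X) (I : T.Cell)
    {K : Set (Euc D)} (hKm : MeasurableSet K) (hKsub : K ⊆ T.cset I) (hK0 : ρ K = 0) :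
    T.cellErr ρ xstar I ≤
      (Metric.diam (T.cset I \ K)) ^ 2 * (ρ (T.cset I)).toReal := by
  set S : Set (Euc D) := T.cset I \ K with hS
  have hSbd : Bornology.IsBounded S := hbd.subset (((Set.diff_subset)).trans (T.cset_subset_X I))
  have hSm : MeasurableSet S := (T.cset_measurable I).diff hKm
  have hSae : T.cset I =ᵐ[ρ] S := by
    refine (MeasureTheory.ae_eq_set).2 ⟨?_, ?_⟩
    · have : T.cset I \ S = K := by
        rw [hS, Set.diff_diff_right, Set.diff_self, Set.empty_union,
          Set.inter_eq_self_of_subset_right hKsub]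
      rw [this]; exact hK0
    · rw [Set.diff_eq_empty.2 (Set.diff_subset)]; exact measure_empty
  have hρS : ρ S = ρ (T.cset I) := by
    rw [hS]; exact measure_diff_null hK0
  set d : ℝ := Metric.diam S with hd
  have hd0 : 0 ≤ d := Metric.diam_nonneg
  rcases eq_or_ne (ρ (T.cset I)) 0 with hρ | hρ
  · have : T.cellErr ρ xstar I = 0 := by
      unfold PartitionTree.cellErr
      rw [Measure.restrict_eq_zero.2 hρ, integral_zero_measure]
    rw [this, hρ]
    simp
  · set r : ℝ := (ρ (T.cset I)).toReal with hr
    have hrpos : 0 < r := ENNReal.toReal_pos hρ (measure_ne_top ρ _)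
    set c : Euc D := T.center ρ xstar I with hc
    have hcdef : c = r⁻¹ • ∫ x in T.cset I, x ∂ρ := by
      rw [hc]; unfold PartitionTree.center; rw [if_pos hρ]
    -- pointwise bound on S
    have hpt : ∀ x ∈ S, ‖x - c‖ ≤ d := by
      intro x hx
      have hid : MeasureTheory.IntegrableOn (fun y : Euc D => y) (T.cset I) ρ :=
        integrableOn_id hbd hdiam h0 I
      have hconst : MeasureTheory.IntegrableOn (fun _ : Euc D => x) (T.cset I) ρ :=
        MeasureTheory.integrableOn_const (measure_ne_top ρ _)
      have hint : (∫ y in T.cset I, (x - y) ∂ρ) = r • (x - c) := by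
        rw [MeasureTheory.integral_sub hconst hid]
        rw [MeasureTheory.setIntegral_const, measureReal_def, hcdef, smul_sub, smul_smul,
          mul_inv_cancel₀ hrpos.ne', one_smul]
      have hintS : (∫ y in T.cset I, (x - y) ∂ρ) = ∫ y in S, (x - y) ∂ρ :=
        MeasureTheory.setIntegral_congr_set hSae
      have hbdd : ‖∫ y in S, (x - y) ∂ρ‖ ≤ d * (ρ S).toReal := by
        refine MeasureTheory.norm_setIntegral_le_of_norm_le_const (measure_lt_top ρ _) ?_
        · intro y hy
          have : dist x y ≤ d := Metric.dist_le_diam_of_mem hSbd hx hy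
          simpa [dist_eq_norm] using this
      rw [← hintS, hint, norm_smul, Real.norm_of_nonneg hrpos.le, hρS, ← hr] at hbdd
      calc ‖x - c‖ = r⁻¹ * (r * ‖x - c‖) := by field_simp
        _ ≤ r⁻¹ * (d * r) := by
            apply mul_le_mul_of_nonneg_left hbdd (by positivity)
        _ = d := by field_simp
    -- integrate
    have hEq : T.cellErr ρ xstar I = ∫ x in S, ‖x - c‖ ^ 2 ∂ρ := by
      unfold PartitionTree.cellErr
      exact MeasureTheory.setIntegral_congr_set hSae
    have hInt : MeasureTheory.IntegrableOn (fun x => ‖x - c‖ ^ 2) S ρ := by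
      refine Measure.integrableOn_of_bounded (M := d ^ 2) (measure_ne_top ρ _)
        ((aestronglyMeasurable_id.sub aestronglyMeasurable_const).norm.pow 2) ?_
      filter_upwards [ae_restrict_mem hSm] with y hy
      have h1 := hpt y hy
      have : ‖y - c‖ ^ 2 ≤ d ^ 2 := by nlinarith [norm_nonneg (y - c)]
      simpa [abs_of_nonneg (sq_nonneg ‖y - c‖), Real.norm_of_nonneg (sq_nonneg ‖y - c‖)]
        using this
    have hle : (∫ x in S, ‖x - c‖ ^ 2 ∂ρ) ≤ ∫ _ in S, d ^ 2 ∂ρ := by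
      refine MeasureTheory.setIntegral_mono_on hInt
        (MeasureTheory.integrableOn_const (measure_ne_top ρ _)) hSm ?_
      intro x hx
      have h1 := hpt x hx
      nlinarith [norm_nonneg (x - c)]
    rw [hEq]
    refine hle.trans ?_
    rw [MeasureTheory.setIntegral_const, measureReal_def, hρS, smul_eq_mul, mul_comm]

end Analytic

end Aux
section Heavy

variable {D : ℕ} {X : Set (Euc D)} {a : ℕ} {T : PartitionTree D X a}
  {ρ : Measure (Euc D)} {xstar : T.Cell → Euc D} {b s C₁ C₂ : ℝ}

instance ediam_nonempty (ρ : Measure (Euc D)) (I : Set (Euc D)) :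
    Nonempty {J : Set (Euc D) // MeasurableSet J ∧ J ⊆ I ∧ ρ J = 0} :=
  ⟨⟨∅, MeasurableSet.empty, Set.empty_subset _, measure_empty⟩⟩

/-- Facts about heavy cells: lower bound on measure, upper bound on `b ^ depth`. -/
lemma heavy_facts [IsProbabilityMeasure ρ] (hbd : Bornology.IsBounded X)
    (hdiam : Metric.diam X ≤ 1) (h0 : (0 : Euc D) ∈ X)
    (hA : AssumptionA T ρ b s C₁ C₂) (hb : 1 < b) (hs : 0 < s) (hC₁ : 0 < C₁)
    {η : ℝ} (hη : 0 < η) {J : T.Cell} (hJ : η ≤ T.eps ρ xstar J) :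
    (η / C₁) ^ ((2:ℝ) / (2 * s + 1)) ≤ (ρ (T.cset J)).toReal ∧
      (b : ℝ) ^ (T.depth J) ≤ C₂ / η := by
  have hη2 : η ^ 2 ≤ T.epsSq ρ xstar J := (Real.le_sqrt' hη).1 hJ
  have hE : η ^ 2 ≤ T.cellErr ρ xstar J := hη2.trans (T.epsSq_le_cellErr ρ xstar J)
  set t : ℝ := (ρ (T.cset J)).toReal with ht
  have ht1 : t ≤ 1 := by
    rw [ht]
    exact ENNReal.toReal_le_of_le_ofReal one_pos.le (by simpa using prob_le_one)
  have hKey : ∀ K : {K : Set (Euc D) // MeasurableSet K ∧ K ⊆ T.cset J ∧ ρ K = 0},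
      η ^ 2 ≤ (Metric.diam (T.cset J \ (K : Set (Euc D)))) ^ 2 * t := fun K =>
    hE.trans (cellErr_le_diam_sq hbd hdiam h0 J K.2.1 K.2.2.1 K.2.2.2)
  have ht0 : 0 < t := by
    rcases lt_or_ge 0 t with h | h
    · exact h
    · exfalso
      have h2 := hKey ⟨∅, MeasurableSet.empty, Set.empty_subset _, measure_empty⟩
      nlinarith [sq_nonneg (Metric.diam (T.cset J \ ∅))]
  have hsqrt_t : 0 < Real.sqrt t := Real.sqrt_pos.2 ht0
  have hstep : ∀ K : {K : Set (Euc D) // MeasurableSet K ∧ K ⊆ T.cset J ∧ ρ K = 0},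
      η / Real.sqrt t ≤ Metric.diam (T.cset J \ (K : Set (Euc D))) := by
    intro K
    have h2 := hKey K
    set d := Metric.diam (T.cset J \ (K : Set (Euc D))) with hdd
    have hd0 : 0 ≤ d := Metric.diam_nonneg
    have h3 : (η / Real.sqrt t) ^ 2 ≤ d ^ 2 := by
      rw [div_pow, Real.sq_sqrt ht0.le, div_le_iff₀ ht0]
      exact h2
    calc η / Real.sqrt t = Real.sqrt ((η / Real.sqrt t) ^ 2) :=
          (Real.sqrt_sq (by positivity)).symm
      _ ≤ Real.sqrt (d ^ 2) := Real.sqrt_le_sqrt h3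
      _ = d := Real.sqrt_sq hd0
  have hediam : η / Real.sqrt t ≤ ediam ρ (T.cset J) := le_ciInf hstep
  have hsqrt_le : Real.sqrt t ≤ 1 := by
    rw [show (1:ℝ) = Real.sqrt 1 by simp]
    exact Real.sqrt_le_sqrt ht1
  have hη_le : η ≤ η / Real.sqrt t := by
    rw [le_div_iff₀ hsqrt_t]
    nlinarith
  constructor
  · -- measure lower bound
    have h1 : η / Real.sqrt t ≤ C₁ * t ^ s := hediam.trans (hA J).1
    have h2 : η ≤ C₁ * t ^ (s + 1/2 : ℝ) := by
      have h2' : η ≤ C₁ * t ^ s * Real.sqrt t := by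
        have hh := mul_le_mul_of_nonneg_right h1 (Real.sqrt_nonneg t)
        rwa [div_mul_cancel₀ _ hsqrt_t.ne'] at hh
      calc η ≤ C₁ * t ^ s * Real.sqrt t := h2'
        _ = C₁ * t ^ (s + 1/2 : ℝ) := by
            rw [Real.sqrt_eq_rpow, mul_assoc, ← Real.rpow_add ht0]
    have h3 : η / C₁ ≤ t ^ (s + 1/2 : ℝ) := by
      rw [div_le_iff₀ hC₁, mul_comm]
      exact h2
    have h4 : (η / C₁) ^ ((2:ℝ) / (2 * s + 1)) ≤
        (t ^ (s + 1/2 : ℝ)) ^ ((2:ℝ) / (2 * s + 1)) :=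
      Real.rpow_le_rpow (by positivity) h3 (by positivity)
    refine h4.trans_eq ?_
    rw [← Real.rpow_mul ht0.le]
    have harith : (s + 1/2) * ((2:ℝ) / (2 * s + 1)) = 1 := by
      field_simp
    rw [harith, Real.rpow_one]
  · -- depth bound
    have h1 : η ≤ C₂ * b ^ (-(T.depth J : ℝ)) := (hη_le.trans hediam).trans (hA J).2
    have hbpos : (0:ℝ) < b := lt_trans one_pos hb
    have hbj : (0:ℝ) < b ^ (T.depth J) := by positivity
    rw [Real.rpow_neg hbpos.le, Real.rpow_natCast] at h1
    rw [le_div_iff₀ hη]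
    calc (b:ℝ) ^ (T.depth J) * η ≤ b ^ (T.depth J) * (C₂ * (b ^ (T.depth J))⁻¹) := by
          exact mul_le_mul_of_nonneg_left h1 hbj.le
      _ = C₂ := by field_simp
end Heavy

section Counting

variable {D : ℕ} {X : Set (Euc D)} {a : ℕ}

lemma ncard_biUnion_le' {ι α : Type*} (F : Finset ι) (f : ι → Set α)
    (hf : ∀ i ∈ F, (f i).Finite) :
    (⋃ i ∈ F, f i).ncard ≤ ∑ i ∈ F, (f i).ncard := by
  classical
  induction F using Finset.induction with
  | empty => simp
  | @insert i F hnot ih =>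
      rw [Finset.sum_insert hnot]
      have hrw : ⋃ j ∈ insert i F, f j = f i ∪ ⋃ j ∈ F, f j := by
        simp [Set.biUnion_insert]
      rw [hrw]
      refine (Set.ncard_union_le _ _).trans ?_
      exact add_le_add_right (ih fun j hj => hf j (Finset.mem_insert_of_mem hj)) _

lemma level_count (T : PartitionTree D X a) (ρ : Measure (Euc D))
    [IsProbabilityMeasure ρ] {m : ℝ} (hm : 0 < m) (j : ℕ) :
    {I : T.Cell | T.depth I = j ∧ m ≤ (ρ (T.cset I)).toReal}.Finite ∧
    ({I : T.Cell | T.depth I = j ∧ m ≤ (ρ (T.cset I)).toReal}.ncard : ℝ) ≤ 1 / m := by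
  set G := {I : T.Cell | T.depth I = j ∧ m ≤ (ρ (T.cset I)).toReal} with hG
  have hGfin : G.Finite := (T.level_finite j).subset fun I hI => hI.1
  refine ⟨hGfin, ?_⟩
  set F := hGfin.toFinset with hF
  have hmem : ∀ I, I ∈ F ↔ I ∈ G := fun I => hGfin.mem_toFinset
  have hdisj : (↑F : Set T.Cell).PairwiseDisjoint T.cset := by
    intro I hI J hJ hne
    refine T.level_disjoint I J ?_ hne
    have h1 := ((hmem I).1 hI).1
    have h2 := ((hmem J).1 hJ).1
    rw [h1, h2]
  have hsum : ∑ I ∈ F, ρ (T.cset I) ≤ 1 := by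
    rw [← measure_biUnion_finset hdisj fun I _ => T.cset_measurable I]
    exact prob_le_one
  have hsumR : ∑ I ∈ F, (ρ (T.cset I)).toReal ≤ 1 := by
    rw [← ENNReal.toReal_sum fun I _ => measure_ne_top ρ _]
    calc (∑ I ∈ F, ρ (T.cset I)).toReal ≤ (1 : ℝ≥0∞).toReal :=
          ENNReal.toReal_mono ENNReal.one_ne_top hsum
      _ = 1 := by simp
  have hcard : (F.card : ℝ) * m ≤ ∑ I ∈ F, (ρ (T.cset I)).toReal := by
    have h := Finset.card_nsmul_le_sum F (fun I => (ρ (T.cset I)).toReal) m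
      (fun I hI => ((hmem I).1 hI).2)
    simpa [nsmul_eq_mul] using h
  rw [le_div_iff₀ hm, Set.ncard_eq_toFinset_card G hGfin]
  exact hcard.trans hsumR

lemma outerLeaves_bound (T : PartitionTree D X a) {S : Set T.Cell} (hS : S.Finite) :
    (T.outerLeaves S).Finite ∧ ((T.outerLeaves S).ncard : ℝ) ≤ (a : ℝ) * S.ncard := by
  classical
  have hsub : T.outerLeaves S ⊆ ⋃ I ∈ S, T.children I := by
    intro J hJ
    have hJroot : J ≠ T.root := by
      intro h
      apply hJ.1
      have := hJ.2
      rw [h, T.parent_root] at this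
      rw [h]
      exact this
    exact Set.mem_biUnion hJ.2 ⟨rfl, hJroot⟩
  have hfin : (⋃ I ∈ S, T.children I).Finite :=
    hS.biUnion fun I _ => T.children_finite I
  refine ⟨hfin.subset hsub, ?_⟩
  have h1 : (T.outerLeaves S).ncard ≤ (⋃ I ∈ S, T.children I).ncard :=
    Set.ncard_le_ncard hsub hfin
  have hrw : (⋃ I ∈ S, T.children I) = ⋃ I ∈ hS.toFinset, T.children I := by
    simp [Set.Finite.mem_toFinset]
  have h2 : (⋃ I ∈ S, T.children I).ncard ≤ ∑ I ∈ hS.toFinset, (T.children I).ncard := by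
    rw [hrw]
    exact ncard_biUnion_le' hS.toFinset _ fun I _ => T.children_finite I
  have h3 : ∑ I ∈ hS.toFinset, (T.children I).ncard ≤ ∑ I ∈ hS.toFinset, a :=
    Finset.sum_le_sum fun I _ => T.ncard_children_le I
  have h4 : ∑ I ∈ hS.toFinset, a = S.ncard * a := by
    rw [Finset.sum_const, smul_eq_mul, Set.ncard_eq_toFinset_card S hS]
  have : (T.outerLeaves S).ncard ≤ a * S.ncard := by
    calc (T.outerLeaves S).ncard ≤ _ := h1
      _ ≤ _ := h2
      _ ≤ _ := h3
      _ = S.ncard * a := h4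
      _ = a * S.ncard := Nat.mul_comm _ _
  calc ((T.outerLeaves S).ncard : ℝ) ≤ ((a * S.ncard : ℕ) : ℝ) := Nat.cast_le.2 this
    _ = (a : ℝ) * S.ncard := by push_cast; ring

end Counting
set_option maxHeartbeats 2000000 in
theorem stmt_7 (a : ℕ) (b s C₁ C₂ : ℝ) (ha : 1 ≤ a) (hb : 1 < b) (hs : 0 < s)
    (hC₁ : 0 < C₁) (hC₂ : 0 < C₂) :
    ∃ c : ℝ, 0 < c ∧ ∀ σ : ℝ, 0 < σ → σ < s → ∃ cσ : ℝ, 0 < cσ ∧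
      ∀ (D : ℕ) (X : Set (Euc D)) (T : PartitionTree D X a)
        (ρ : Measure (Euc D)) (xstar : T.Cell → Euc D),
        IsProbabilityMeasure ρ → ρ Xᶜ = 0 → (0 : Euc D) ∈ X →
        Bornology.IsBounded X → Metric.diam X ≤ 1 → (∀ I, xstar I ∈ X) →
        AssumptionA T ρ b s C₁ C₂ →
        ∀ η : ℝ, 0 < η → η < 1 →
          (T.Teta ρ xstar η).Finite ∧
          ((T.Teta ρ xstar η).ncard : ℝ) ≤
            c * η ^ (-(2 : ℝ) / (2 * s + 1)) * Real.log (2 / η) ∧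
          ((T.outerLeaves (T.Teta ρ xstar η)).ncard : ℝ) ≤
            c * a * η ^ (-(2 : ℝ) / (2 * s + 1)) * Real.log (2 / η) ∧
          ((T.Teta ρ xstar η).ncard : ℝ) ≤ cσ * η ^ (-(2 : ℝ) / (2 * σ + 1)) ∧
          ((T.outerLeaves (T.Teta ρ xstar η)).ncard : ℝ) ≤
            cσ * η ^ (-(2 : ℝ) / (2 * σ + 1)) := by
  have hlog2 : (0:ℝ) < Real.log 2 := Real.log_pos one_lt_two
  have hlogb : (0:ℝ) < Real.log b := Real.log_pos hb
  have h2s1 : (0:ℝ) < 2 * s + 1 := by linarith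
  set K : ℝ := max (C₁ ^ ((2:ℝ) / (2 * s + 1))) 1 with hKdef
  have hK1 : (1:ℝ) ≤ K := le_max_right _ _
  have hKpos : (0:ℝ) < K := lt_of_lt_of_le one_pos hK1
  have hMnn : 0 ≤ max (Real.log C₂) 0 := le_max_right _ _
  set L : ℝ := (max (Real.log C₂) 0 / Real.log 2 + 1) / Real.log b + 1 / Real.log 2
    with hLdef
  have hLpos : 0 < L := by
    rw [hLdef]
    have h1 : 0 ≤ (max (Real.log C₂) 0 / Real.log 2 + 1) / Real.log b := by positivity
    have h2 : 0 < 1 / Real.log 2 := by positivity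
    linarith
  have hL2 : 1 / Real.log 2 ≤ L := by
    rw [hLdef]
    have h1 : 0 ≤ (max (Real.log C₂) 0 / Real.log 2 + 1) / Real.log b := by positivity
    linarith
  refine ⟨L * K, by positivity, fun σ hσ0 hσs => ?_⟩
  have h2σ1 : (0:ℝ) < 2 * σ + 1 := by linarith
  set δ : ℝ := 2 / (2 * σ + 1) - 2 / (2 * s + 1) with hδdef
  have hδpos : 0 < δ := by
    rw [hδdef]
    have : 2 / (2 * s + 1) < 2 / (2 * σ + 1) :=
      div_lt_div_of_pos_left two_pos h2σ1 (by linarith)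
    linarith
  refine ⟨L * K * ((a:ℝ) + 1) * 2 ^ δ / δ, by positivity, ?_⟩
  intro D X T ρ xstar hprob hXc h0mem hbd hdiam hxstar hA η hη0 hη1
  haveI := hprob
  have h2η : (0:ℝ) < 2 / η := by positivity
  have hlogmono : Real.log 2 ≤ Real.log (2 / η) := by
    apply Real.log_le_log two_pos
    rw [le_div_iff₀ hη0]
    nlinarith
  have hlogpos : 0 < Real.log (2 / η) := lt_of_lt_of_le hlog2 hlogmono
  have hηe : (1:ℝ) ≤ η ^ (-(2:ℝ) / (2 * s + 1)) :=
    Real.one_le_rpow_of_pos_of_le_one_of_nonpos hη0 hη1.le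
      (by apply div_nonpos_of_nonpos_of_nonneg <;> linarith)
  set E : ℝ := η ^ (-(2:ℝ) / (2 * s + 1)) with hEdef
  have hEpos : 0 < E := Real.rpow_pos_of_pos hη0 _
  have main : (T.Teta ρ xstar η).Finite ∧
      ((T.Teta ρ xstar η).ncard : ℝ) ≤ (L * Real.log (2 / η)) * (K * E) := by
    unfold PartitionTree.Teta
    split_ifs with hall
    · refine ⟨Set.finite_singleton _, ?_⟩
      rw [Set.ncard_singleton]
      have h1 : 1 ≤ L * Real.log (2 / η) := by
        calc (1:ℝ) = (1 / Real.log 2) * Real.log 2 := by field_simp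
          _ ≤ L * Real.log (2 / η) := mul_le_mul hL2 hlogmono hlog2.le hLpos.le
      have h2 : (1:ℝ) ≤ K * E := by nlinarith
      push_cast
      nlinarith
    · push_neg at hall
      obtain ⟨J0, hJ0⟩ := hall
      have hJ0' : η ≤ T.eps ρ xstar J0 := hJ0
      set m : ℝ := (η / C₁) ^ ((2:ℝ) / (2 * s + 1)) with hmdef
      have hmpos : 0 < m := Real.rpow_pos_of_pos (by positivity) _
      set N : ℕ := ⌊Real.logb b (C₂ / η)⌋₊ with hNdef
      have hheavy := fun (J : T.Cell) (hJ : η ≤ T.eps ρ xstar J) =>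
        heavy_facts (xstar := xstar) hbd hdiam h0mem hA hb hs hC₁ hη0 hJ
      have hdepth : ∀ J : T.Cell, η ≤ T.eps ρ xstar J → T.depth J ≤ N := by
        intro J hJ
        have h1 := (hheavy J hJ).2
        have hbj : (0:ℝ) < b ^ (T.depth J) := by positivity
        have hblog : (T.depth J : ℝ) * Real.log b ≤ Real.log (C₂ / η) := by
          have h2 := Real.log_le_log hbj h1
          rwa [Real.log_pow] at h2
        refine Nat.le_floor ?_
        rw [Real.logb, le_div_iff₀ hlogb]
        exact hblog
      have hmeas : ∀ I : T.Cell, (∃ k, ∃ J ∈ T.descend k I, η ≤ T.eps ρ xstar J) →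
          m ≤ (ρ (T.cset I)).toReal ∧ T.depth I ≤ N := by
        rintro I ⟨k, J, hJd, hJh⟩
        constructor
        · refine (hheavy J hJh).1.trans ?_
          exact ENNReal.toReal_mono (measure_ne_top ρ _)
            (measure_mono (T.descend_cset_subset k hJd))
        · have h1 := T.descend_depth k hJd
          have h2 := hdepth J hJh
          omega
      have hsub : {I : T.Cell | ∃ k, ∃ J ∈ T.descend k I, η ≤ T.eps ρ xstar J} ⊆
          ⋃ j ∈ Finset.range (N + 1),
            {I : T.Cell | T.depth I = j ∧ m ≤ (ρ (T.cset I)).toReal} := by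
        intro I hI
        obtain ⟨h1, h2⟩ := hmeas I hI
        exact Set.mem_biUnion (Finset.mem_range.2 (by omega)) ⟨rfl, h1⟩
      have hfin : (⋃ j ∈ Finset.range (N + 1),
          {I : T.Cell | T.depth I = j ∧ m ≤ (ρ (T.cset I)).toReal}).Finite :=
        Set.Finite.biUnion (Finset.range (N + 1)).finite_toSet
          fun j _ => (level_count T ρ hmpos j).1
      refine ⟨hfin.subset hsub, ?_⟩
      have hc1 : (({I : T.Cell | ∃ k, ∃ J ∈ T.descend k I, η ≤ T.eps ρ xstar J}).ncard : ℝ)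
          ≤ ((N:ℝ) + 1) * (1 / m) := by
        have h := (Set.ncard_le_ncard hsub hfin).trans
          (ncard_biUnion_le' _ _ fun j _ => (level_count T ρ hmpos j).1)
        calc (({I : T.Cell | ∃ k, ∃ J ∈ T.descend k I, η ≤ T.eps ρ xstar J}).ncard : ℝ)
            ≤ ((∑ j ∈ Finset.range (N + 1),
                ({I : T.Cell | T.depth I = j ∧ m ≤ (ρ (T.cset I)).toReal}).ncard : ℕ) : ℝ) :=
              Nat.cast_le.2 h
          _ = ∑ j ∈ Finset.range (N + 1),
                (({I : T.Cell | T.depth I = j ∧ m ≤ (ρ (T.cset I)).toReal}).ncard : ℝ) := by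
              push_cast; ring
          _ ≤ ∑ _j ∈ Finset.range (N + 1), 1 / m :=
              Finset.sum_le_sum fun j _ => (level_count T ρ hmpos j).2
          _ = ((N:ℝ) + 1) * (1 / m) := by
              rw [Finset.sum_const, Finset.card_range]; push_cast; ring
      have hC₂η : (1:ℝ) ≤ C₂ / η := by
        have h1 := (hheavy J0 hJ0').2
        have h2 : (1:ℝ) ≤ b ^ (T.depth J0) := one_le_pow₀ hb.le
        linarith
      have hlogbnn : 0 ≤ Real.logb b (C₂ / η) := Real.logb_nonneg hb hC₂η
      have hN1 : (N:ℝ) + 1 ≤ L * Real.log (2 / η) := by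
        have hfloor : (N:ℝ) ≤ Real.logb b (C₂ / η) := Nat.floor_le hlogbnn
        rw [Real.logb] at hfloor
        have e1 : (N:ℝ) * Real.log b ≤ Real.log (C₂ / η) := (le_div_iff₀ hlogb).1 hfloor
        have hlogC2 : Real.log (C₂ / η) ≤ max (Real.log C₂) 0 + Real.log (2 / η) := by
          rw [Real.log_div hC₂.ne' hη0.ne', Real.log_div two_ne_zero hη0.ne']
          have h3 := le_max_left (Real.log C₂) 0
          linarith
        have hmax : max (Real.log C₂) 0 ≤
            (max (Real.log C₂) 0 / Real.log 2) * Real.log (2 / η) := by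
          rw [div_mul_eq_mul_div, le_div_iff₀ hlog2]
          exact mul_le_mul_of_nonneg_left hlogmono hMnn
        have e2 : (N:ℝ) ≤ ((max (Real.log C₂) 0 / Real.log 2 + 1) / Real.log b) *
            Real.log (2 / η) := by
          rw [div_mul_eq_mul_div, le_div_iff₀ hlogb, add_mul, one_mul]
          linarith
        have e3 : (1:ℝ) ≤ (1 / Real.log 2) * Real.log (2 / η) := by
          rw [div_mul_eq_mul_div, le_div_iff₀ hlog2, one_mul]
          linarith
        rw [hLdef, add_mul]
        linarith
      have hm : 1 / m ≤ K * E := by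
        have hmeq : (1:ℝ) / m = (C₁ / η) ^ ((2:ℝ) / (2 * s + 1)) := by
          rw [hmdef, one_div, ← Real.inv_rpow (by positivity), inv_div]
        have hEeq : E = (η ^ ((2:ℝ) / (2 * s + 1)))⁻¹ := by
          rw [hEdef, neg_div, Real.rpow_neg hη0.le]
        rw [hmeq, Real.div_rpow hC₁.le hη0.le, hEeq, div_eq_mul_inv]
        exact mul_le_mul_of_nonneg_right (le_max_left _ _) (by positivity)
      calc (({I : T.Cell | ∃ k, ∃ J ∈ T.descend k I, η ≤ T.eps ρ xstar J}).ncard : ℝ)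
          ≤ ((N:ℝ) + 1) * (1 / m) := hc1
        _ ≤ (L * Real.log (2 / η)) * (K * E) :=
            mul_le_mul hN1 hm (by positivity) (by positivity)
  obtain ⟨hfinT, hcardT⟩ := main
  obtain ⟨hfinL, hcardL⟩ := outerLeaves_bound T hfinT
  have hcardL' : ((T.outerLeaves (T.Teta ρ xstar η)).ncard : ℝ) ≤
      (a:ℝ) * ((L * Real.log (2 / η)) * (K * E)) :=
    hcardL.trans (mul_le_mul_of_nonneg_left hcardT (by positivity))
  -- σ-bounds machinery
  have hlogle : Real.log (2 / η) ≤ ((2 / η) ^ δ) / δ := by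
    have h1 : Real.log ((2 / η) ^ δ) = δ * Real.log (2 / η) := Real.log_rpow h2η δ
    have h2 : Real.log ((2 / η) ^ δ) ≤ (2 / η) ^ δ - 1 :=
      Real.log_le_sub_one_of_pos (Real.rpow_pos_of_pos h2η δ)
    rw [le_div_iff₀ hδpos]
    linarith
  have hsplit : ((2:ℝ) / η) ^ δ = 2 ^ δ * η ^ (-δ) := by
    rw [Real.div_rpow (by norm_num) hη0.le, Real.rpow_neg hη0.le, div_eq_mul_inv]
  have hcomb : E * η ^ (-δ) = η ^ (-(2:ℝ) / (2 * σ + 1)) := by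
    rw [hEdef, ← Real.rpow_add hη0]
    congr 1
    rw [hδdef]
    ring
  have hησ : 0 ≤ η ^ (-(2:ℝ) / (2 * σ + 1)) := (Real.rpow_pos_of_pos hη0 _).le
  have hstep2 : (L * Real.log (2 / η)) * (K * E) ≤
      (L * K * 2 ^ δ / δ) * η ^ (-(2:ℝ) / (2 * σ + 1)) := by
    calc (L * Real.log (2 / η)) * (K * E)
        ≤ (L * (((2 / η) ^ δ) / δ)) * (K * E) :=
          mul_le_mul_of_nonneg_right (mul_le_mul_of_nonneg_left hlogle hLpos.le)
            (by positivity)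
      _ = (L * K * 2 ^ δ / δ) * (E * η ^ (-δ)) := by rw [hsplit]; ring
      _ = (L * K * 2 ^ δ / δ) * η ^ (-(2:ℝ) / (2 * σ + 1)) := by rw [hcomb]
  have ha1 : (1:ℝ) ≤ (a:ℝ) := by exact_mod_cast ha
  have hbase : (0:ℝ) ≤ L * K * 2 ^ δ / δ := by positivity
  have hfrac : L * K * 2 ^ δ / δ ≤ L * K * ((a:ℝ) + 1) * 2 ^ δ / δ := by
    calc L * K * 2 ^ δ / δ = (L * K * 2 ^ δ / δ) * 1 := (mul_one _).symm
      _ ≤ (L * K * 2 ^ δ / δ) * ((a:ℝ) + 1) :=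
          mul_le_mul_of_nonneg_left (by linarith) hbase
      _ = L * K * ((a:ℝ) + 1) * 2 ^ δ / δ := by ring
  refine ⟨hfinT, ?_, ?_, ?_, ?_⟩
  · refine hcardT.trans (le_of_eq ?_)
    ring
  · refine hcardL'.trans (le_of_eq ?_)
    ring
  · refine hcardT.trans (hstep2.trans ?_)
    exact mul_le_mul_of_nonneg_right hfrac hησ
  · refine hcardL'.trans ?_
    have hstep3 : (a:ℝ) * ((L * Real.log (2 / η)) * (K * E)) ≤
        (a:ℝ) * ((L * K * 2 ^ δ / δ) * η ^ (-(2:ℝ) / (2 * σ + 1))) :=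
      mul_le_mul_of_nonneg_left hstep2 (by positivity)
    refine hstep3.trans ?_
    have h2 : (a:ℝ) * (L * K * 2 ^ δ / δ) ≤ L * K * ((a:ℝ) + 1) * 2 ^ δ / δ := by
      have h3 : (a:ℝ) * (L * K * 2 ^ δ / δ) = (L * K * 2 ^ δ / δ) * (a:ℝ) := by ring
      have h4 : L * K * ((a:ℝ) + 1) * 2 ^ δ / δ = (L * K * 2 ^ δ / δ) * ((a:ℝ) + 1) := by
        ring
      rw [h3, h4]
      exact mul_le_mul_of_nonneg_left (by linarith) hbase
    calc (a:ℝ) * ((L * K * 2 ^ δ / δ) * η ^ (-(2:ℝ) / (2 * σ + 1)))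
        = ((a:ℝ) * (L * K * 2 ^ δ / δ)) * η ^ (-(2:ℝ) / (2 * σ + 1)) := by ring
      _ ≤ (L * K * ((a:ℝ) + 1) * 2 ^ δ / δ) * η ^ (-(2:ℝ) / (2 * σ + 1)) :=
          mul_le_mul_of_nonneg_right h2 hησ

end
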